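/- There exist two co-r.e. equivalence relations E and F on ℕ whose join E ⊔ F in the lattice of equivalence relations is not co-r.e.; that is, the co-r.e. equivalence relations are not closed under finite join. -/

import Mathlib

open Nat.Partrec (Code)
open Nat.Partrec.Code
open Relation

namespace CoreSup

/-- Witness predicate: code `n` halts on input 0 within `s` steps. -/
def W (n s : ℕ) : Bool := (evaln s (Denumerable.ofNat Code n) 0).isSome

/-- `s+1` is exactly the least number of steps for code `n` to halt on input 0. -/
def D (n s : ℕ) : Bool := W n (s+1) && !W n s

lemma W_mono {n s s' : ℕ} (h : s ≤ s') (hw : W n s = true) : W n s' = true := by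
  unfold W at *
  obtain ⟨x, hx⟩ := Option.isSome_iff_exists.1 hw
  exact Option.isSome_iff_exists.2 ⟨x, evaln_mono h hx⟩

lemma W_zero (n : ℕ) : W n 0 = false := by simp [W, evaln]

lemma D_iff {n s : ℕ} : D n s = true ↔ W n (s+1) = true ∧ W n s = false := by
  simp [D]

lemma D_unique {n s s' : ℕ} (h : D n s = true) (h' : D n s' = true) : s = s' := by
  rw [D_iff] at h h'
  rcases lt_trichotomy s s' with hlt | heq | hlt
  · exact absurd (W_mono hlt h.1) (by simp [h'.2])
  · exact heq
  · exact absurd (W_mono hlt h'.1) (by simp [h.2])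

lemma K_iff (n : ℕ) :
    (eval (Denumerable.ofNat Code n) 0).Dom ↔ ∃ s, D n s = true := by
  constructor
  · intro h
    obtain ⟨x, hx⟩ := Part.dom_iff_mem.1 h
    obtain ⟨k, hk⟩ := evaln_complete.1 hx
    have hWk : W n k = true := Option.isSome_iff_exists.2 ⟨x, hk⟩
    have hex : ∃ k, W n k = true := ⟨k, hWk⟩
    classical
    let k₀ := Nat.find hex
    have hk₀ : W n k₀ = true := Nat.find_spec hex
    have hk₀pos : k₀ ≠ 0 := by
      intro h0
      rw [h0, W_zero] at hk₀
      exact absurd hk₀ (by simp)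
    refine ⟨k₀ - 1, D_iff.2 ⟨?_, ?_⟩⟩
    · have he : k₀ - 1 + 1 = k₀ := by omega
      rw [he]; exact hk₀
    · have := Nat.find_min hex (m := k₀ - 1) (by omega)
      simpa using this
  · rintro ⟨s, hs⟩
    have h1 := (D_iff.1 hs).1
    obtain ⟨x, hx⟩ := Option.isSome_iff_exists.1 h1
    exact Part.dom_iff_mem.2 ⟨x, evaln_sound hx⟩

/-- The function whose kernel is the first equivalence relation. -/
def f (x : ℕ) : ℕ :=
  if x.unpair.2 ≤ 1 then x
  else if x.unpair.2 % 2 = 1 then Nat.pair x.unpair.1 (x.unpair.2 - 1)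
  else if 4 ≤ x.unpair.2 ∧ D x.unpair.1 (x.unpair.2 / 2 - 2) = true then
    Nat.pair x.unpair.1 1
  else x

/-- The function whose kernel is the second equivalence relation. -/
def g (x : ℕ) : ℕ :=
  if x.unpair.2 = 2 then Nat.pair x.unpair.1 0
  else if x.unpair.2 % 2 = 0 ∧ 4 ≤ x.unpair.2 then Nat.pair x.unpair.1 (x.unpair.2 - 1)
  else x

lemma f_le1 {n t : ℕ} (h : t ≤ 1) : f (Nat.pair n t) = Nat.pair n t := by
  simp [f, Nat.unpair_pair, h]

lemma f_odd {n k : ℕ} (hk : 1 ≤ k) : f (Nat.pair n (2*k+1)) = Nat.pair n (2*k) := by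
  have h1 : ¬(2*k+1 ≤ 1) := by omega
  have h2 : (2*k+1) % 2 = 1 := by omega
  simp [f, Nat.unpair_pair, h1, h2]

lemma f_even_nD {n k : ℕ} (hk : 1 ≤ k) (h : k = 1 ∨ D n (k-2) = false) :
    f (Nat.pair n (2*k)) = Nat.pair n (2*k) := by
  have h1 : ¬(2*k ≤ 1) := by omega
  have h2 : ¬((2*k) % 2 = 1) := by omega
  have h3 : ¬(4 ≤ 2*k ∧ D n ((2*k) / 2 - 2) = true) := by
    rintro ⟨h4, hD⟩
    have he : (2*k) / 2 = k := by omega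
    rw [he] at hD
    rcases h with h | h
    · omega
    · rw [h] at hD; exact absurd hD (by simp)
  simp only [f, Nat.unpair_pair, if_neg h1, if_neg h2, if_neg h3]

lemma f_even_D {n k : ℕ} (hk : 2 ≤ k) (hD : D n (k-2) = true) :
    f (Nat.pair n (2*k)) = Nat.pair n 1 := by
  have h1 : ¬(2*k ≤ 1) := by omega
  have h2 : ¬((2*k) % 2 = 1) := by omega
  have h3 : 4 ≤ 2*k ∧ D n ((2*k) / 2 - 2) = true := by
    refine ⟨by omega, ?_⟩
    have he : (2*k) / 2 = k := by omega
    rw [he]; exact hD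
  simp only [f, Nat.unpair_pair, if_neg h1, if_neg h2, if_pos h3]

lemma g0 {n : ℕ} : g (Nat.pair n 0) = Nat.pair n 0 := by simp [g, Nat.unpair_pair]

lemma g1 {n : ℕ} : g (Nat.pair n 1) = Nat.pair n 1 := by simp [g, Nat.unpair_pair]

lemma g2 {n : ℕ} : g (Nat.pair n 2) = Nat.pair n 0 := by simp [g, Nat.unpair_pair]

lemma g_odd {n k : ℕ} : g (Nat.pair n (2*k+1)) = Nat.pair n (2*k+1) := by
  have h1 : ¬(2*k+1 = 2) := by omega
  have h2 : ¬((2*k+1) % 2 = 0 ∧ 4 ≤ 2*k+1) := by omega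
  simp only [g, Nat.unpair_pair, if_neg h1, if_neg h2]

lemma g_even {n k : ℕ} (hk : 2 ≤ k) : g (Nat.pair n (2*k)) = Nat.pair n (2*k-1) := by
  have h1 : ¬(2*k = 2) := by omega
  have h2 : (2*k) % 2 = 0 ∧ 4 ≤ 2*k := by omega
  simp only [g, Nat.unpair_pair, if_neg h1, if_pos h2]

/-- The one-step relation generating the join. -/
def R (x y : ℕ) : Prop := f x = f y ∨ g x = g y

lemma chain (n s₀ : ℕ) (hD : D n s₀ = true) :
    ∀ k, 1 ≤ k → k ≤ s₀ + 1 → EqvGen R (Nat.pair n 0) (Nat.pair n (2*k)) := by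
  intro k
  induction k with
  | zero => omega
  | succ k ih =>
    intro _ hk1
    rcases Nat.eq_or_lt_of_le (show 1 ≤ k + 1 from by omega) with h1 | h1
    · -- k + 1 = 1 : base case, relate pair n 0 to pair n 2
      have hk0 : k = 0 := by omega
      subst hk0
      apply EqvGen.rel
      right
      rw [g0, show 2*1 = 2 from rfl, g2]
    · -- step case
      have hk : 1 ≤ k := by omega
      have ih' := ih hk (by omega)
      have hside : k = 1 ∨ D n (k-2) = false := by
        rcases Nat.eq_or_lt_of_le hk with h | h
        · exact Or.inl h.symm
        · right
          by_contra hcon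
          have hDk : D n (k-2) = true := by
            cases hh : D n (k-2)
            · exact absurd hh hcon
            · rfl
          have := D_unique hDk hD
          omega
      have step1 : R (Nat.pair n (2*k)) (Nat.pair n (2*k+1)) := by
        left
        rw [f_odd hk, f_even_nD hk hside]
      have step2 : R (Nat.pair n (2*k+1)) (Nat.pair n (2*(k+1))) := by
        right
        rw [g_odd, g_even (by omega)]
        congr 1
      exact EqvGen.trans _ _ _ ih'
        (EqvGen.trans _ _ _ (EqvGen.rel _ _ step1) (EqvGen.rel _ _ step2))

lemma forward (n : ℕ) (h : ∃ s, D n s = true) :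
    EqvGen R (Nat.pair n 0) (Nat.pair n 1) := by
  obtain ⟨s₀, hD⟩ := h
  have hchain := chain n s₀ hD (s₀ + 1) (by omega) le_rfl
  have hside : s₀ + 1 = 1 ∨ D n (s₀+1-2) = false := by
    rcases Nat.eq_zero_or_pos s₀ with h0 | h0
    · left; omega
    · right
      by_contra hcon
      have hDk : D n (s₀+1-2) = true := by
        cases hh : D n (s₀+1-2)
        · exact absurd hh hcon
        · rfl
      have := D_unique hDk hD
      omega
  have step1 : R (Nat.pair n (2*(s₀+1))) (Nat.pair n (2*(s₀+1)+1)) := by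
    left
    rw [f_odd (by omega), f_even_nD (by omega) hside]
  have step2 : R (Nat.pair n (2*(s₀+1)+1)) (Nat.pair n (2*(s₀+2))) := by
    right
    rw [g_odd, g_even (by omega)]
    congr 1
  have step3 : R (Nat.pair n (2*(s₀+2))) (Nat.pair n 1) := by
    left
    rw [f_even_D (by omega) (by simpa using hD), f_le1 (by omega)]
  exact EqvGen.trans _ _ _ hchain
    (EqvGen.trans _ _ _ (EqvGen.rel _ _ step1)
      (EqvGen.trans _ _ _ (EqvGen.rel _ _ step2) (EqvGen.rel _ _ step3)))

lemma f_fst (x : ℕ) : (f x).unpair.1 = x.unpair.1 := by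
  unfold f
  split_ifs <;> simp [Nat.unpair_pair]

lemma g_fst (x : ℕ) : (g x).unpair.1 = x.unpair.1 := by
  unfold g
  split_ifs <;> simp [Nat.unpair_pair]

lemma f_snd {n : ℕ} (hn : ¬∃ s, D n s = true) {x : ℕ} (hx : x.unpair.1 = n) :
    ((f x).unpair.2 = 1 ↔ x.unpair.2 = 1) := by
  unfold f
  split_ifs with h1 h2 h3
  · exact Iff.rfl
  · simp only [Nat.unpair_pair]
    omega
  · exact absurd ⟨x.unpair.2 / 2 - 2, hx ▸ h3.2⟩ hn
  · exact Iff.rfl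

lemma g_snd (x : ℕ) : ((g x).unpair.2 = 1 ↔ x.unpair.2 = 1) := by
  unfold g
  split_ifs with h1 h2
  · simp only [Nat.unpair_pair]
    omega
  · simp only [Nat.unpair_pair]
    omega
  · exact Iff.rfl

/-- The invariant used to block chains when the machine does not halt. -/
def A (n x : ℕ) : Prop := x.unpair.1 = n → x.unpair.2 ≠ 1

lemma backward (n : ℕ) (hn : ¬∃ s, D n s = true) :
    ¬ EqvGen R (Nat.pair n 0) (Nat.pair n 1) := by
  have key : ∀ x y, EqvGen R x y → (A n x ↔ A n y) := by
    intro x y h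
    induction h with
    | rel x y hxy =>
      rcases hxy with h | h
      · have hfst : x.unpair.1 = y.unpair.1 := by
          rw [← f_fst x, ← f_fst y, h]
        by_cases hx1 : x.unpair.1 = n
        · have hy1 : y.unpair.1 = n := hfst ▸ hx1
          have hx2 := f_snd hn hx1
          have hy2 := f_snd hn hy1
          rw [h] at hx2
          have hiff : x.unpair.2 = 1 ↔ y.unpair.2 = 1 := hx2.symm.trans hy2
          unfold A
          constructor
          · intro ha _ hcon
            exact ha hx1 (hiff.2 hcon)
          · intro ha _ hcon
            exact ha hy1 (hiff.1 hcon)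
        · have hy1 : y.unpair.1 ≠ n := fun hc => hx1 (hfst ▸ hc)
          unfold A
          constructor
          · intro _ hc; exact absurd hc hy1
          · intro _ hc; exact absurd hc hx1
      · have hfst : x.unpair.1 = y.unpair.1 := by
          rw [← g_fst x, ← g_fst y, h]
        have hx2 := g_snd x
        have hy2 := g_snd y
        rw [h] at hx2
        have hiff : x.unpair.2 = 1 ↔ y.unpair.2 = 1 := hx2.symm.trans hy2
        unfold A
        constructor
        · intro ha hy1 hcon
          exact ha (hfst ▸ hy1) (hiff.2 hcon)
        · intro ha hx1 hcon
          exact ha (hfst ▸ hx1) (hiff.1 hcon)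
    | refl x => exact Iff.rfl
    | symm x y _ ih => exact ih.symm
    | trans x y z _ _ ih1 ih2 => exact ih1.trans ih2
  intro h
  have hA0 : A n (Nat.pair n 0) := by
    intro _
    simp [Nat.unpair_pair]
  have := (key _ _ h).1 hA0
  have h1 : (Nat.pair n 1).unpair.1 = n := by simp [Nat.unpair_pair]
  have h2 : (Nat.pair n 1).unpair.2 = 1 := by simp [Nat.unpair_pair]
  exact this h1 h2

/-- Primitive recursiveness of the witness function. -/
lemma primrec_W : Primrec₂ W :=
  Primrec.option_isSome.comp
    (primrec_evaln.comp
      ((Primrec.snd.pair ((Primrec.ofNat Code).comp Primrec.fst)).pair (Primrec.const 0)))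

lemma primrec_D : Primrec₂ D :=
  Primrec.and.comp (primrec_W.comp Primrec.fst (Primrec.succ.comp Primrec.snd))
    (Primrec.not.comp (primrec_W.comp Primrec.fst Primrec.snd))

lemma primrec_f : Primrec f := by
  have u1 : Primrec fun x : ℕ => x.unpair.1 := Primrec.fst.comp Primrec.unpair
  have u2 : Primrec fun x : ℕ => x.unpair.2 := Primrec.snd.comp Primrec.unpair
  have c1 : PrimrecPred fun x : ℕ => x.unpair.2 ≤ 1 :=
    Primrec.nat_le.comp u2 (Primrec.const 1)
  have c2 : PrimrecPred fun x : ℕ => x.unpair.2 % 2 = 1 :=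
    Primrec.eq.comp (Primrec.nat_mod.comp u2 (Primrec.const 2)) (Primrec.const 1)
  have c3 : PrimrecPred fun x : ℕ =>
      4 ≤ x.unpair.2 ∧ D x.unpair.1 (x.unpair.2 / 2 - 2) = true := by
    apply PrimrecPred.and
    · exact Primrec.nat_le.comp (Primrec.const 4) u2
    · exact Primrec.eq.comp
        (primrec_D.comp u1
          (Primrec.nat_sub.comp (Primrec.nat_div.comp u2 (Primrec.const 2))
            (Primrec.const 2)))
        (Primrec.const true)
  have v2 : Primrec fun x : ℕ => Nat.pair x.unpair.1 (x.unpair.2 - 1) :=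
    Primrec₂.natPair.comp u1 (Primrec.nat_sub.comp u2 (Primrec.const 1))
  have v3 : Primrec fun x : ℕ => Nat.pair x.unpair.1 1 :=
    Primrec₂.natPair.comp u1 (Primrec.const 1)
  exact Primrec.ite c1 Primrec.id (Primrec.ite c2 v2 (Primrec.ite c3 v3 Primrec.id))

lemma primrec_g : Primrec g := by
  have u1 : Primrec fun x : ℕ => x.unpair.1 := Primrec.fst.comp Primrec.unpair
  have u2 : Primrec fun x : ℕ => x.unpair.2 := Primrec.snd.comp Primrec.unpair
  have c1 : PrimrecPred fun x : ℕ => x.unpair.2 = 2 :=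
    Primrec.eq.comp u2 (Primrec.const 2)
  have c2 : PrimrecPred fun x : ℕ => x.unpair.2 % 2 = 0 ∧ 4 ≤ x.unpair.2 := by
    apply PrimrecPred.and
    · exact Primrec.eq.comp (Primrec.nat_mod.comp u2 (Primrec.const 2)) (Primrec.const 0)
    · exact Primrec.nat_le.comp (Primrec.const 4) u2
  have v1 : Primrec fun x : ℕ => Nat.pair x.unpair.1 0 :=
    Primrec₂.natPair.comp u1 (Primrec.const 0)
  have v2 : Primrec fun x : ℕ => Nat.pair x.unpair.1 (x.unpair.2 - 1) :=
    Primrec₂.natPair.comp u1 (Primrec.nat_sub.comp u2 (Primrec.const 1))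
  exact Primrec.ite c1 v1 (Primrec.ite c2 v2 Primrec.id)

lemma ker_core {h : ℕ → ℕ} (hh : Primrec h) :
    REPred fun p : ℕ × ℕ => ¬ (Setoid.ker h).r p.1 p.2 := by
  have hp : PrimrecPred fun p : ℕ × ℕ => h p.1 = h p.2 :=
    Primrec.eq.comp (hh.comp Primrec.fst) (hh.comp Primrec.snd)
  have hc : ComputablePred fun p : ℕ × ℕ => h p.1 = h p.2 :=
    hp.computablePred
  exact (hc.not).to_re

lemma rePred_comp {α β : Type} [Primcodable α] [Primcodable β] {p : β → Prop}
    (hp : REPred p) {q : α → β} (hq : Computable q) : REPred fun a => p (q a) :=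
  Partrec.comp hp hq

end CoreSup

/-- A predicate is recursively enumerable (r.e.); `RePred` is Mathlib's name for it. -/
abbrev REPred' {α : Type} [Primcodable α] (p : α → Prop) : Prop := REPred p

/-- There are two co-r.e. equivalence relations on ℕ whose join is not co-r.e.:
the co-r.e. equivalence relations are not closed under finite join. -/
theorem core_not_closed_under_sup :
    ∃ E F : Setoid ℕ,
      REPred' (fun p : ℕ × ℕ => ¬ E.r p.1 p.2) ∧
      REPred' (fun p : ℕ × ℕ => ¬ F.r p.1 p.2) ∧
      ¬ REPred' (fun p : ℕ × ℕ => ¬ (E ⊔ F).r p.1 p.2) := by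
  classical
  refine ⟨Setoid.ker CoreSup.f, Setoid.ker CoreSup.g,
    CoreSup.ker_core CoreSup.primrec_f, CoreSup.ker_core CoreSup.primrec_g, ?_⟩
  intro hre
  -- the join is generated by the one-step relation R
  have sup_iff : ∀ x y : ℕ,
      (Setoid.ker CoreSup.f ⊔ Setoid.ker CoreSup.g).r x y ↔ EqvGen CoreSup.R x y := by
    intro x y
    rw [Setoid.sup_eq_eqvGen]
    exact Iff.rfl
  -- main characterization
  have main : ∀ n : ℕ,
      (Setoid.ker CoreSup.f ⊔ Setoid.ker CoreSup.g).r (Nat.pair n 0) (Nat.pair n 1) ↔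
        (Nat.Partrec.Code.eval (Denumerable.ofNat Nat.Partrec.Code n) 0).Dom := by
    intro n
    rw [sup_iff, CoreSup.K_iff]
    constructor
    · intro h
      by_contra hcon
      exact CoreSup.backward n hcon h
    · exact CoreSup.forward n
  -- compose with the computable function n ↦ (pair n 0, pair n 1)
  have hq : Computable fun n : ℕ => (Nat.pair n 0, Nat.pair n 1) :=
    Computable.pair
      (Primrec.to_comp (Primrec₂.natPair.comp Primrec.id (Primrec.const 0)))
      (Primrec.to_comp (Primrec₂.natPair.comp Primrec.id (Primrec.const 1)))
  have h1 : REPred fun n : ℕ =>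
      ¬ (Setoid.ker CoreSup.f ⊔ Setoid.ker CoreSup.g).r (Nat.pair n 0) (Nat.pair n 1) :=
    CoreSup.rePred_comp hre hq
  have h2 : REPred fun n : ℕ =>
      ¬ (Nat.Partrec.Code.eval (Denumerable.ofNat Nat.Partrec.Code n) 0).Dom :=
    h1.of_eq fun n => by rw [main n]
  -- transfer back to codes, contradicting non-r.e. of complement of halting problem
  have h3 : REPred fun c : Nat.Partrec.Code => ¬ (Nat.Partrec.Code.eval c 0).Dom := by
    have := CoreSup.rePred_comp h2 (Computable.encode (α := Nat.Partrec.Code))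
    exact this.of_eq fun c => by rw [Denumerable.ofNat_encode]
  exact ComputablePred.halting_problem_not_re 0 h3
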